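/- Let (G, η, E) be a dynamical system on a full Hilbert A-module E and let (Ψ, v, w, F, F') be a (w,v)-covariant quasi-representation: Ψ(η_t(x)) = w_t Ψ(x) v_t* for all x ∈ E, t ∈ G, where v, w are unitary representations of G on Hilbert B-modules F, F'. If π : A → B^a(F) is the *-homomorphism associated to Ψ, then π is v-covariant with respect to the induced C*-dynamical system (G, α^η, A): π(α^η_t(a)) = v_t π(a) v_t* for all a ∈ A, t ∈ G. -/

import Mathlib

/-- A (pre-)inner-product module over a C*-algebra `A`: a complex vector space `E`
with a right `A`-action and an `A`-valued inner product, conjugate-linear in the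
first variable. -/
structure PreHilbertMod (A : Type*) (E : Type*)
    [NormedRing A] [StarRing A] [PartialOrder A]
    [NormedAlgebra ℂ A] [AddCommGroup E] [Module ℂ E] where
  smul : E → A → E
  inner : E → E → A
  smul_smul : ∀ (x : E) (a b : A), smul (smul x a) b = smul x (a * b)
  smul_add_right : ∀ (x : E) (a b : A), smul x (a + b) = smul x a + smul x b
  add_smul_left : ∀ (x y : E) (a : A), smul (x + y) a = smul x a + smul y a
  smulC_left : ∀ (α : ℂ) (x : E) (a : A), smul (α • x) a = α • smul x a
  smulC_right : ∀ (α : ℂ) (x : E) (a : A), smul x (α • a) = α • smul x a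
  inner_nonneg : ∀ x : E, 0 ≤ inner x x
  inner_definite : ∀ x : E, inner x x = 0 → x = 0
  inner_smul_right : ∀ (x y : E) (a : A), inner x (smul y a) = inner x y * a
  inner_conj : ∀ x y : E, inner x y = star (inner y x)
  inner_add_right : ∀ x y z : E, inner x (y + z) = inner x y + inner x z
  inner_smulC_right : ∀ (x y : E) (μ : ℂ), inner x (μ • y) = μ • inner x y

/-- if `(Ψ, v, w, F, F')` is a `(w,v)`-covariant
quasi-representation of a dynamical system `(G, η, E)` on a full Hilbert
`A`-module `E`, then the associated *-homomorphism `π : A → B^a(F)` is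
`v`-covariant with respect to the induced system `(G, α^η, A)`:
`π(α^η_t(a)) = v_t π(a) v_t*`. -/
theorem covariant_quasi_rep_gives_covariant_rep {A B E F F' G : Type*}
    [NormedRing A] [StarRing A] [CStarRing A] [PartialOrder A] [StarOrderedRing A]
    [NormedAlgebra ℂ A] [StarModule ℂ A] [CompleteSpace A]
    [NormedRing B] [StarRing B] [CStarRing B] [PartialOrder B] [StarOrderedRing B]
    [NormedAlgebra ℂ B] [StarModule ℂ B] [CompleteSpace B]
    [NormedAddCommGroup E] [NormedSpace ℂ E]
    [AddCommGroup F] [Module ℂ F] [AddCommGroup F'] [Module ℂ F']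
    [Group G] [TopologicalSpace G] [IsTopologicalGroup G] [LocallyCompactSpace G]
    (hE : PreHilbertMod A E)
    (hnormE : ∀ x : E, ‖x‖ ^ 2 = ‖hE.inner x x‖)
    (hfull : Dense ((Submodule.span ℂ
      {a : A | ∃ x y : E, a = hE.inner x y} : Submodule ℂ A) : Set A))
    (hF : PreHilbertMod B F) (hF' : PreHilbertMod B F')
    -- the dynamical system `(G, η, E)` and its induced system `(G, α^η, A)`
    (η : G → E → E)
    (hη_one : ∀ x : E, η 1 x = x)
    (hη_mul : ∀ (s t : G) (x : E), η (s * t) x = η s (η t x))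
    (hη_bij : ∀ t : G, Function.Bijective (η t))
    (hη_cont : ∀ x : E, Continuous fun t : G => η t x)
    (α : G → A → A)
    (hα_add : ∀ (t : G) (a b : A), α t (a + b) = α t a + α t b)
    (hα_smulC : ∀ (t : G) (μ : ℂ) (a : A), α t (μ • a) = μ • α t a)
    (hα_cont : ∀ t : G, Continuous (α t))
    (hα : ∀ (t : G) (x y : E), α t (hE.inner x y) = hE.inner (η t x) (η t y))
    -- unitary representations `v` on `F` and `w` on `F'` (with adjoints)
    (v : G → F → F) (vadj : G → F → F)
    (hv_adj : ∀ (t : G) (f g : F), hF.inner (v t f) g = hF.inner f (vadj t g))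
    (hv_left : ∀ (t : G) (f : F), v t (vadj t f) = f)
    (hv_right : ∀ (t : G) (f : F), vadj t (v t f) = f)
    (w : G → F' → F') (wadj : G → F' → F')
    (hw_adj : ∀ (t : G) (f g : F'), hF'.inner (w t f) g = hF'.inner f (wadj t g))
    (hw_left : ∀ (t : G) (f : F'), w t (wadj t f) = f)
    (hw_right : ∀ (t : G) (f : F'), wadj t (w t f) = f)
    -- the quasi-representation `Ψ` with associated *-homomorphism `π`
    (Ψ : E → F → F') (π : A → F → F)
    (hπ_add : ∀ (a a' : A) (f : F), π (a + a') f = π a f + π a' f)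
    (hπ_smulC : ∀ (μ : ℂ) (a : A) (f : F), π (μ • a) f = μ • π a f)
    (hπ_cont : ∀ (f f' : F), Continuous fun a : A => hF.inner (π a f) f')
    (hquasi : ∀ (x y : E) (f₁ f₂ : F),
      hF'.inner (Ψ y f₁) (Ψ x f₂) = hF.inner (π (hE.inner x y) f₁) f₂)
    -- `(w,v)`-covariance of `Ψ`
    (hΨcov : ∀ (t : G) (x : E) (f : F), Ψ (η t x) f = w t (Ψ x (vadj t f))) :
    ∀ (t : G) (a : A) (f : F), π (α t a) f = v t (π a (vadj t f)) := by

  intro t a f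
  -- basic consequences of the axioms
  have hFzero_right : ∀ p : F, hF.inner p 0 = 0 := by
    intro p
    have := hF.inner_add_right p 0 0
    rw [add_zero] at this
    exact add_eq_left.mp this.symm
  have hFzero_left : ∀ p : F, hF.inner 0 p = 0 := by
    intro p; rw [hF.inner_conj, hFzero_right, star_zero]
  have hFadd_left : ∀ p q r : F, hF.inner (p + q) r = hF.inner p r + hF.inner q r := by
    intro p q r
    rw [hF.inner_conj, hF.inner_add_right, star_add, ← hF.inner_conj, ← hF.inner_conj]
  have hFsmul_left : ∀ (μ : ℂ) (p r : F),
      hF.inner (μ • p) r = star μ • hF.inner p r := by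
    intro μ p r
    rw [hF.inner_conj, hF.inner_smulC_right, star_smul, ← hF.inner_conj]
  have hα_zero : α t 0 = 0 := by
    have := hα_add t 0 0
    rw [add_zero] at this
    exact add_eq_left.mp this.symm
  have hπ_zero : ∀ f : F, π 0 f = 0 := by
    intro f
    have := hπ_add 0 0 f
    rw [add_zero] at this
    exact add_eq_left.mp this.symm
  -- main: equality of inner products against all g
  have key : ∀ g : F,
      hF.inner (π (α t a) f) g = hF.inner (π a (vadj t f)) (vadj t g) := by
    intro g
    set S : Set A := {b : A |
      hF.inner (π (α t b) f) g = hF.inner (π b (vadj t f)) (vadj t g)} with hS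
    have hclosed : IsClosed S := by
      apply isClosed_eq
      · exact (hπ_cont f g).comp (hα_cont t)
      · exact hπ_cont (vadj t f) (vadj t g)
    have hspan : (Submodule.span ℂ
        {b : A | ∃ x y : E, b = hE.inner x y} : Submodule ℂ A) ≤
        Submodule.comap (LinearMap.id (R := ℂ) (M := A)) ⊤ := le_top
    have hmem : ∀ b ∈ (Submodule.span ℂ
        {b : A | ∃ x y : E, b = hE.inner x y} : Submodule ℂ A), b ∈ S := by
      intro b hb
      induction hb using Submodule.span_induction with
      | mem b hb =>
        obtain ⟨x, y, rfl⟩ := hb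
        show hF.inner (π (α t (hE.inner x y)) f) g
            = hF.inner (π (hE.inner x y) (vadj t f)) (vadj t g)
        rw [hα, ← hquasi, ← hquasi, hΨcov, hΨcov, hw_adj, hw_right]
      | zero =>
        show hF.inner (π (α t 0) f) g = hF.inner (π 0 (vadj t f)) (vadj t g)
        rw [hα_zero, hπ_zero, hπ_zero, hFzero_left, hFzero_left]
      | add b c _ _ hbS hcS =>
        show hF.inner (π (α t (b + c)) f) g
            = hF.inner (π (b + c) (vadj t f)) (vadj t g)
        rw [hα_add, hπ_add, hπ_add, hFadd_left, hFadd_left, hbS, hcS]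
      | smul μ b _ hbS =>
        show hF.inner (π (α t (μ • b)) f) g
            = hF.inner (π (μ • b) (vadj t f)) (vadj t g)
        rw [hα_smulC, hπ_smulC, hπ_smulC, hFsmul_left, hFsmul_left, hbS]
    have hsub : ((Submodule.span ℂ
        {b : A | ∃ x y : E, b = hE.inner x y} : Submodule ℂ A) : Set A) ⊆ S :=
      fun b hb => hmem b hb
    have : (Set.univ : Set A) ⊆ S := by
      rw [← hclosed.closure_eq]
      calc (Set.univ : Set A) = closure ((Submodule.span ℂ
            {b : A | ∃ x y : E, b = hE.inner x y} : Submodule ℂ A) : Set A) :=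
            (hfull.closure_eq).symm
        _ ⊆ closure S := closure_mono hsub
    exact this (Set.mem_univ a)
  have key2 : ∀ g : F,
      hF.inner (π (α t a) f) g = hF.inner (v t (π a (vadj t f))) g := by
    intro g; rw [key g, ← hv_adj]
  -- deduce equality of vectors
  set x := π (α t a) f
  set y := v t (π a (vadj t f))
  have key3 : ∀ g : F, hF.inner g x = hF.inner g y := by
    intro g
    rw [hF.inner_conj, key2, ← hF.inner_conj]
  have hd : hF.inner (x + (-1 : ℂ) • y) (x + (-1 : ℂ) • y) = 0 := by
    rw [hF.inner_add_right, hF.inner_smulC_right, key3 (x + (-1 : ℂ) • y)]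
    ring_nf
    simp
  have := hF.inner_definite _ hd
  have hxy : x = y := by
    have h1 : x + (-1 : ℂ) • y = x - y := by
      rw [neg_one_smul, ← sub_eq_add_neg]
    rw [h1] at this
    exact sub_eq_zero.mp this
  exact hxy
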